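/- Let A, C, q ∈ ℂ with 0 < |q| < 1, and let (a_n)_{n≥0} be a sequence of complex numbers satisfying a_1 = a_0^2 + (A + C)·a_0 and (n+1)·a_{n+1} = A·q^n·a_n + Σ_{i+j=n} a_i·a_j + C·a_n for all n ≥ 1 (the sum over pairs (i,j) of nonnegative integers with i + j = n). If β := |a_0| > 1, then |a_n| ≤ β^{n+1}·(|A| + |C| + β)^n for all n ≥ 0. -/

import Mathlib

/-- If `0 < |q| < 1`, `(a n)` satisfies `a₁ = a₀² + (A+C) a₀` and
`(n+1) a_{n+1} = A qⁿ a_n + Σ_{i+j=n} a_i a_j + C a_n` for all `n ≥ 1`, and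
`β := |a₀| > 1`, then `|a_n| ≤ β^{n+1} (|A| + |C| + β)ⁿ` for all `n`. -/
theorem stmt14 (A C q : ℂ) (hq0 : 0 < ‖q‖) (hq1 : ‖q‖ < 1)
    (a : ℕ → ℂ)
    (h1 : a 1 = (a 0) ^ 2 + (A + C) * a 0)
    (hrec : ∀ n : ℕ, 1 ≤ n →
      ((n : ℂ) + 1) * a (n + 1) =
        A * q ^ n * a n + (∑ p ∈ Finset.HasAntidiagonal.antidiagonal n, a p.1 * a p.2) + C * a n)
    (ha0 : 1 < ‖a 0‖) :
    ∀ n : ℕ, ‖a n‖ ≤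
      ‖a 0‖ ^ (n + 1) *
        (‖A‖ + ‖C‖ + ‖a 0‖) ^ n := by
  set β := ‖a 0‖ with hβ
  set M := ‖A‖ + ‖C‖ + β with hMdef
  clear_value M
  clear_value β
  have hA : 0 ≤ ‖A‖ := norm_nonneg _
  have hC : 0 ≤ ‖C‖ := norm_nonneg _
  have hβ1 : 1 < β := ha0
  have hM1 : 1 < M := by nlinarith
  intro n
  induction n using Nat.strong_induction_on with
  | _ n ih =>
    match n, ih with
    | 0, _ => simp [← hβ]
    | 1, _ =>
      rw [h1]
      calc ‖a 0 ^ 2 + (A + C) * a 0‖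
          ≤ ‖a 0 ^ 2‖ + ‖(A + C) * a 0‖ :=
            norm_add_le _ _
        _ ≤ β ^ 2 + (‖A‖ + ‖C‖) * β := by
            rw [norm_pow, norm_mul]
            have := norm_add_le A C
            nlinarith
        _ ≤ β ^ 2 * M ^ 1 := by
            rw [pow_one, hMdef]
            have e1 : 0 ≤ β * (β - 1) * (‖A‖ + ‖C‖) := by
              apply mul_nonneg
              · nlinarith
              · linarith
            have e2 : 0 ≤ β ^ 2 * (β - 1) := by nlinarith
            nlinarith [e1, e2]
    | (m + 2), ih =>
      have hr := hrec (m + 1) (by omega)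
      have habs := congrArg (‖·‖) hr
      rw [norm_mul] at habs
      have hcast : ‖((m + 1 : ℕ) : ℂ) + 1‖ = (m : ℝ) + 2 := by
        have : ((m + 1 : ℕ) : ℂ) + 1 = ((m + 2 : ℕ) : ℂ) := by push_cast; ring
        rw [this, Complex.norm_natCast]; push_cast; ring
      rw [hcast] at habs
      -- bounds on components
      have hprev : ‖a (m + 1)‖ ≤ β ^ (m + 2) * M ^ (m + 1) :=
        ih (m + 1) (by omega)
      have hqpow : ‖q‖ ^ (m + 1) ≤ 1 :=
        pow_le_one₀ (le_of_lt hq0) (le_of_lt hq1)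
      have hsum : ‖∑ p ∈ Finset.HasAntidiagonal.antidiagonal (m + 1), a p.1 * a p.2‖
          ≤ ((m : ℝ) + 2) * (β ^ (m + 3) * M ^ (m + 1)) := by
        calc ‖∑ p ∈ Finset.HasAntidiagonal.antidiagonal (m + 1), a p.1 * a p.2‖
            ≤ ∑ p ∈ Finset.HasAntidiagonal.antidiagonal (m + 1), ‖a p.1 * a p.2‖ :=
              norm_sum_le _ _
          _ ≤ ∑ _p ∈ Finset.HasAntidiagonal.antidiagonal (m + 1), β ^ (m + 3) * M ^ (m + 1) := by
              apply Finset.sum_le_sum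
              intro p hp
              rw [Finset.HasAntidiagonal.mem_antidiagonal] at hp
              rw [norm_mul]
              have h1' := ih p.1 (by omega)
              have h2' := ih p.2 (by omega)
              calc ‖a p.1‖ * ‖a p.2‖
                  ≤ (β ^ (p.1 + 1) * M ^ p.1) * (β ^ (p.2 + 1) * M ^ p.2) := by
                    apply mul_le_mul h1' h2' (norm_nonneg _)
                    positivity
                _ = β ^ (p.1 + 1 + (p.2 + 1)) * M ^ (p.1 + p.2) := by
                    rw [pow_add, pow_add]; ring
                _ = β ^ (m + 3) * M ^ (m + 1) := by
                    rw [show p.1 + 1 + (p.2 + 1) = m + 3 by omega, hp]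
          _ = ((m : ℝ) + 2) * (β ^ (m + 3) * M ^ (m + 1)) := by
              rw [Finset.sum_const, Finset.Nat.card_antidiagonal]
              push_cast; ring
      have hRHS : ‖A * q ^ (m + 1) * a (m + 1)
              + (∑ p ∈ Finset.HasAntidiagonal.antidiagonal (m + 1), a p.1 * a p.2) + C * a (m + 1)‖
          ≤ ‖A‖ * (β ^ (m + 2) * M ^ (m + 1))
            + ((m : ℝ) + 2) * (β ^ (m + 3) * M ^ (m + 1))
            + ‖C‖ * (β ^ (m + 2) * M ^ (m + 1)) := by
        refine le_trans (norm_add_le _ _) ?_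
        have t1 : ‖A * q ^ (m + 1) * a (m + 1)‖
            ≤ ‖A‖ * (β ^ (m + 2) * M ^ (m + 1)) := by
          rw [norm_mul, norm_mul, norm_pow]
          have hq1' : ‖q‖ ^ (m + 1) * ‖a (m + 1)‖
              ≤ 1 * (β ^ (m + 2) * M ^ (m + 1)) := by
            apply mul_le_mul hqpow hprev (norm_nonneg _) zero_le_one
          nlinarith [norm_nonneg (a (m+1)),
            pow_nonneg (norm_nonneg q) (m+1)]
        have t3 : ‖C * a (m + 1)‖
            ≤ ‖C‖ * (β ^ (m + 2) * M ^ (m + 1)) := by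
          rw [norm_mul]
          exact mul_le_mul_of_nonneg_left hprev hC
        have := add_le_add (norm_add_le
          (A * q ^ (m + 1) * a (m + 1)) (∑ p ∈ Finset.HasAntidiagonal.antidiagonal (m + 1), a p.1 * a p.2)) t3
        nlinarith [add_le_add t1 hsum]
      have hkey : ((m : ℝ) + 2) * ‖a (m + 2)‖
          ≤ ((m : ℝ) + 2) * (β ^ (m + 3) * M ^ (m + 2)) := by
        rw [habs]
        refine le_trans hRHS ?_
        have hBpos : (0:ℝ) < β ^ (m + 2) := by positivity
        have hNpos : (0:ℝ) < M ^ (m + 1) := by positivity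
        have h3 : β ^ (m + 3) = β ^ (m + 2) * β := by rw [pow_succ]
        have h4 : M ^ (m + 2) = M ^ (m + 1) * M := by rw [pow_succ]
        rw [h3, h4]
        have hm : (0:ℝ) ≤ (m:ℝ) := Nat.cast_nonneg m
        have key : 0 ≤ (‖A‖ + ‖C‖) * (((m:ℝ) + 2) * β - 1)
            + ((m:ℝ) + 2) * β * (β - 1) := by
          have p1 : 0 ≤ (‖A‖ + ‖C‖) * (((m:ℝ) + 2) * β - 1) :=
            mul_nonneg (add_nonneg hA hC) (by nlinarith)
          have p2 : 0 ≤ ((m:ℝ) + 2) * β * (β - 1) :=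
            mul_nonneg (by nlinarith) (by linarith)
          linarith
        have hmain := mul_nonneg (mul_pos hBpos hNpos).le key
        have hzero : ((m:ℝ) + 2) * (β ^ (m + 2) * β * M ^ (m + 1)) *
            (M - (‖A‖ + ‖C‖ + β)) = 0 := by
          rw [← hMdef]; ring
        nlinarith [hmain, hzero]
      have hpos : (0:ℝ) < (m : ℝ) + 2 := by positivity
      have := le_of_mul_le_mul_left (by linarith [hkey] : ((m:ℝ)+2) * ‖a (m+2)‖ ≤ ((m:ℝ)+2) * (β ^ (m + 3) * M ^ (m + 2))) hpos
      calc ‖a (m + 2)‖ ≤ β ^ (m + 3) * M ^ (m + 2) := this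
        _ = β ^ (m + 2 + 1) * M ^ (m + 2) := by norm_num
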